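/- Let A ∈ ℝ^{n×n} be a Z-matrix (all off-diagonal entries nonpositive). If there exists a vector x with all entries strictly positive such that Ax has all entries strictly positive, then A is invertible and A⁻¹ has all entries nonnegative. -/

import Mathlib

/-- A Z-matrix that maps some strictly positive vector to a strictly
positive vector is a nonsingular M-matrix: it is invertible and its
inverse is entrywise nonnegative. -/
theorem stmt_2 {n : ℕ} (A : Matrix (Fin n) (Fin n) ℝ)
    (hZ : ∀ i j, i ≠ j → A i j ≤ 0)
    (hx : ∃ x : Fin n → ℝ, (∀ i, 0 < x i) ∧ ∀ i, 0 < A.mulVec x i) :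
    IsUnit A ∧ ∀ i j, 0 ≤ A⁻¹ i j := by
  obtain ⟨x, hxpos, hAx⟩ := hx
  have key : ∀ z : Fin n → ℝ, (∀ i, 0 ≤ A.mulVec z i) → ∀ i, 0 ≤ z i := by
    intro z hz
    by_contra h
    push_neg at h
    obtain ⟨i0, hi0⟩ := h
    obtain ⟨i, -, hmin⟩ := Finset.exists_min_image Finset.univ
      (fun j => z j / x j) ⟨i0, Finset.mem_univ i0⟩
    set t := z i / x i with ht
    have htneg : t < 0 := lt_of_le_of_lt (hmin i0 (Finset.mem_univ i0))
      (div_neg_of_neg_of_pos hi0 (hxpos i0))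
    set w : Fin n → ℝ := fun j => z j - t * x j with hw
    have hwnn : ∀ j, 0 ≤ w j := by
      intro j
      have h1 : t * x j ≤ z j := (le_div_iff₀ (hxpos j)).mp (hmin j (Finset.mem_univ j))
      simp only [hw]; linarith
    have hwi : w i = 0 := by
      simp only [hw, ht]
      field_simp [(hxpos i).ne']
      ring
    -- (A w) i > 0
    have hAw : 0 < A.mulVec w i := by
      have : A.mulVec w i = A.mulVec z i - t * A.mulVec x i := by
        simp only [hw]
        have : w = z - t • x := by funext j; simp [hw, sub_eq_add_neg, smul_eq_mul]
        rw [show (fun j => z j - t * x j) = z - t • x from this,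
          Matrix.mulVec_sub, Matrix.mulVec_smul]
        simp
      rw [this]
      have := hz i
      nlinarith [hAx i]
    -- (A w) i ≤ 0
    have hAw' : A.mulVec w i ≤ 0 := by
      rw [Matrix.mulVec, dotProduct]
      apply Finset.sum_nonpos
      intro j _
      by_cases hji : j = i
      · subst hji; rw [hwi]; simp
      · exact mul_nonpos_of_nonpos_of_nonneg (hZ i j (Ne.symm hji)) (hwnn j)
    linarith
  have hinj : Function.Injective A.mulVec := by
    intro a b hab
    have h1 : ∀ i, 0 ≤ (a - b) i := by
      apply key
      intro i
      rw [Matrix.mulVec_sub, hab]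
      simp
    have h2 : ∀ i, 0 ≤ (b - a) i := by
      apply key
      intro i
      rw [Matrix.mulVec_sub, hab]
      simp
    funext i
    have := h1 i; have := h2 i
    simp only [Pi.sub_apply] at *
    linarith
  have hU : IsUnit A := Matrix.mulVec_injective_iff_isUnit.mp hinj
  refine ⟨hU, fun i j => ?_⟩
  have hinv : A * A⁻¹ = 1 :=
    Matrix.mul_nonsing_inv A (Matrix.isUnit_iff_isUnit_det A |>.mp hU)
  have : ∀ k, 0 ≤ (A⁻¹).mulVec (Pi.single j 1) k := by
    apply key
    intro k
    rw [Matrix.mulVec_mulVec, hinv]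
    by_cases hkj : k = j
    · subst hkj; simp
    · simp [Matrix.one_apply, hkj, Pi.single_eq_of_ne hkj]
  have := this i
  rw [Matrix.mulVec_single] at this
  simpa using this
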